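/- For positive integers n, h_2(n) = 0 if and only if n is a power of 2 (including n = 1), and h_2(n) = 1 if and only if n = 3. -/

import Mathlib

open Polynomial Module

/-- The cyclic shift operator on `Fin n → F`. -/
def cycShift (F : Type*) (n : ℕ) : (Fin n → F) → (Fin n → F) :=
  fun x i => x ⟨(i.1 + 1) % n, Nat.mod_lt _ (lt_of_le_of_lt (Nat.zero_le _) i.2)⟩

/-- A subspace `U ≤ F^n` is cyclically covering if the union of its cyclic shifts is `F^n`. -/
def IsCycCovering (F : Type*) [Field F] (n : ℕ) (U : Submodule F (Fin n → F)) : Prop :=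
  ∀ x : Fin n → F, ∃ r : ℕ, (cycShift F n)^[r] x ∈ U

/-- `hq F n` : the maximum codimension of a cyclically covering subspace of `F^n`. -/
noncomputable def hq (F : Type*) [Field F] [Fintype F] (n : ℕ) : ℕ :=
  sSup {k | ∃ U : Submodule F (Fin n → F), IsCycCovering F n U ∧
    Module.finrank F (Fin n → F) - Module.finrank F U = k}

section Aux
lemma cyc_iter (n : ℕ) (hn : 0 < n) (x : Fin n → F) (r : ℕ) (i : Fin n) :
    (cycShift F n)^[r] x i = x ⟨(i.1 + r) % n, Nat.mod_lt _ hn⟩ := by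
  induction r generalizing i with
  | zero => simp [Nat.mod_eq_of_lt i.2]
  | succ r ih =>
    rw [Function.iterate_succ_apply']
    show (cycShift F n)^[r] x ⟨(i.1 + 1) % n, _⟩ = _
    rw [ih]
    congr 1
    ext
    show ((i.1 + 1) % n + r) % n = (i.1 + (r+1)) % n
    rw [Nat.mod_add_mod]
    ring_nf

lemma cyc_iter_mod (n : ℕ) (hn : 0 < n) (x : Fin n → F) (r : ℕ) :
    (cycShift F n)^[r] x = (cycShift F n)^[r % n] x := by
  funext i
  rw [cyc_iter n hn, cyc_iter n hn]
  congr 1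
  ext
  show (i.1 + r) % n = (i.1 + r % n) % n
  conv_rhs => rw [Nat.add_mod, Nat.mod_mod_of_dvd _ dvd_rfl, ← Nat.add_mod]

def dotp {n : ℕ} (a x : Fin n → ZMod 2) : ZMod 2 := ∑ i, a i * x i

def cls (m n k : ℕ) : Fin n → ZMod 2 := fun i => if i.1 % m = k % m then 1 else 0

lemma cls_shift {m n : ℕ} (hm : m ∣ n) (hn : 0 < n) (x : Fin n → ZMod 2) (r k : ℕ) :
    dotp (cls m n k) ((cycShift (ZMod 2) n)^[r] x) = dotp (cls m n (k + r)) x := by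
  haveI : NeZero n := ⟨hn.ne'⟩
  set rn : Fin n := ⟨r % n, Nat.mod_lt _ hn⟩ with hrn
  apply Fintype.sum_equiv (Equiv.addRight rn)
  intro i
  have hval : ((Equiv.addRight rn) i).1 = (i.1 + r) % n := by
    show (i + rn).1 = _
    rw [Fin.add_def]
    show (i.1 + r % n) % n = _
    rw [Nat.add_mod i.1 (r % n), Nat.mod_mod_of_dvd r dvd_rfl, ← Nat.add_mod]
  rw [cyc_iter n hn]
  have hx : x ⟨(i.1 + r) % n, Nat.mod_lt _ hn⟩ = x ((Equiv.addRight rn) i) := by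
    congr 1; exact (Fin.ext hval).symm
  rw [hx]
  congr 1
  show (if i.1 % m = k % m then (1:ZMod 2) else 0)
      = if ((Equiv.addRight rn) i).1 % m = (k + r) % m then 1 else 0
  rw [hval, Nat.mod_mod_of_dvd _ hm]
  have hiff : (i.1 % m = k % m) ↔ ((i.1 + r) % m = (k + r) % m) :=
    ⟨fun h => Nat.ModEq.add_right r h, fun h => Nat.ModEq.add_right_cancel' r h⟩
  simp only [hiff]

lemma dotp_add_left {n : ℕ} (a b x : Fin n → ZMod 2) :
    dotp (a + b) x = dotp a x + dotp b x := by
  simp [dotp, add_mul, Finset.sum_add_distrib]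

lemma dotp_single {n : ℕ} (a : Fin n → ZMod 2) (j : Fin n) :
    dotp a (Pi.single j 1) = a j := by
  simp [dotp, Pi.single_apply]

def ell {n : ℕ} (a : Fin n → ZMod 2) : (Fin n → ZMod 2) →ₗ[ZMod 2] ZMod 2 where
  toFun x := dotp a x
  map_add' x y := by simp [dotp, mul_add, Finset.sum_add_distrib]
  map_smul' c x := by
    simp [dotp, Finset.mul_sum, smul_eq_mul, mul_comm, mul_left_comm]

lemma mem2 {n : ℕ} (hn : 2 ≤ n) (A B : Fin n → ZMod 2)
    (hcov : ∀ x : Fin n → ZMod 2, ∃ r, dotp A ((cycShift (ZMod 2) n)^[r] x) = 0 ∧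
      dotp B ((cycShift (ZMod 2) n)^[r] x) = 0)
    (u v : Fin n → ZMod 2) (hu1 : dotp A u = 1) (hu2 : dotp B u = 0)
    (hv1 : dotp A v = 0) (hv2 : dotp B v = 1) :
    ∃ U : Submodule (ZMod 2) (Fin n → ZMod 2), IsCycCovering (ZMod 2) n U ∧
      finrank (ZMod 2) (Fin n → ZMod 2) - finrank (ZMod 2) U = 2 := by
  set L := (ell A).prod (ell B) with hL
  refine ⟨LinearMap.ker L, ?_, ?_⟩
  · intro x
    obtain ⟨r, h1, h2⟩ := hcov x
    exact ⟨r, by simp [hL, LinearMap.mem_ker, LinearMap.prod_apply, Prod.ext_iff]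
                 exact ⟨h1, h2⟩⟩
  · have hsurj : LinearMap.range L = ⊤ := by
      rw [LinearMap.range_eq_top]
      rintro ⟨c, d⟩
      refine ⟨c • u + d • v, ?_⟩
      have : L (c • u + d • v) = c • L u + d • L v := by simp
      rw [this]
      have h1 : L u = (1, 0) := by
        simp [hL, LinearMap.prod_apply, Prod.ext_iff]; exact ⟨hu1, hu2⟩
      have h2 : L v = (0, 1) := by
        simp [hL, LinearMap.prod_apply, Prod.ext_iff]; exact ⟨hv1, hv2⟩
      rw [h1, h2]
      ext <;> simp
    have hrk := LinearMap.finrank_range_add_finrank_ker L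
    rw [hsurj] at hrk
    have h2 : finrank (ZMod 2) (ZMod 2 × ZMod 2) = 2 := by
      simp [Module.finrank_prod, Module.finrank_self]
    rw [finrank_top, h2, Module.finrank_fin_fun] at hrk
    rw [Module.finrank_fin_fun]
    omega

lemma mem1 {n : ℕ} (hn : 1 ≤ n) (A : Fin n → ZMod 2)
    (hcov : ∀ x : Fin n → ZMod 2, ∃ r, dotp A ((cycShift (ZMod 2) n)^[r] x) = 0)
    (u : Fin n → ZMod 2) (hu1 : dotp A u = 1) :
    ∃ U : Submodule (ZMod 2) (Fin n → ZMod 2), IsCycCovering (ZMod 2) n U ∧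
      finrank (ZMod 2) (Fin n → ZMod 2) - finrank (ZMod 2) U = 1 := by
  refine ⟨LinearMap.ker (ell A), ?_, ?_⟩
  · intro x
    obtain ⟨r, h1⟩ := hcov x
    exact ⟨r, by rw [LinearMap.mem_ker]; exact h1⟩
  · have hsurj : LinearMap.range (ell A) = ⊤ := by
      rw [LinearMap.range_eq_top]
      intro c
      refine ⟨c • u, ?_⟩
      have : ell A (c • u) = c • ell A u := by simp
      rw [this]
      show c • dotp A u = c
      rw [hu1]; simp
    have hrk := LinearMap.finrank_range_add_finrank_ker (ell A)
    rw [hsurj, finrank_top, Module.finrank_self, Module.finrank_fin_fun] at hrk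
    rw [Module.finrank_fin_fun]
    omega

def cval : ZMod 2 → ZMod 2 → ZMod 2 → ZMod 2 := fun b0 b1 b2 => b0*b2 + (1+b1)*(b0+b2)

lemma odd_cast {m : ℕ} (hm : Odd m) : (m : ZMod 2) = 1 := by
  have h := Nat.odd_iff.mp hm
  rw [← ZMod.natCast_mod m 2, h, Nat.cast_one]

lemma seq_lin (Y : ℕ → ZMod 2) (hstep : ∀ r, Y (r + 1) = Y r + 1) (r : ℕ) :
    Y r = Y 0 + (r : ZMod 2) := by
  induction r with
  | zero => simp
  | succ r ih => rw [hstep, ih]; push_cast; ring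

lemma odd_seq1 {m : ℕ} (hm : Odd m) (Y : ℕ → ZMod 2) (hper : ∀ t, Y (t + m) = Y t)
    (hbad : ∀ r, ¬ (Y r + Y (r + 1) = 0)) : False := by
  have hstep : ∀ r, Y (r + 1) = Y r + 1 := by
    intro r
    have h := hbad r
    revert h
    generalize Y (r + 1) = b; generalize Y r = a
    revert a b; decide
  have h1 : Y m = Y 0 := by simpa using hper 0
  have h2 := seq_lin Y hstep m
  rw [h1, odd_cast hm] at h2
  simp at h2

lemma odd_seq2 {m : ℕ} (hm : Odd m) (Y : ℕ → ZMod 2) (hper : ∀ t, Y (t + m) = Y t)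
    (hbad : ∀ r, ¬ (Y r + Y (r + 3) = 0 ∧ Y (r + 1) + Y (r + 2) = 0)) : False := by
  have key : ∀ b0 b1 b2 b3 : ZMod 2, ¬ (b0 + b3 = 0 ∧ b1 + b2 = 0) →
      cval b1 b2 b3 = cval b0 b1 b2 + 1 := by decide
  set s : ℕ → ZMod 2 := fun r => cval (Y r) (Y (r + 1)) (Y (r + 2)) with hs
  have hstep : ∀ r, s (r + 1) = s r + 1 := by
    intro r
    have h := key (Y r) (Y (r+1)) (Y (r+2)) (Y (r+3)) (hbad r)
    simpa [hs, show r+1+1 = r+2 by ring, show r+1+2 = r+3 by ring] using h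
  have a0 : Y m = Y 0 := by simpa using hper 0
  have h1 : s m = s 0 := by
    show cval (Y m) (Y (m+1)) (Y (m+2)) = cval (Y 0) (Y (0+1)) (Y (0+2))
    rw [show m+1 = 1+m by ring, show m+2 = 2+m by ring, hper 1, hper 2, a0]
  have h2 := seq_lin s hstep m
  rw [h1, odd_cast hm] at h2
  simp at h2

lemma six_seq (Y : ℕ → ZMod 2) (hper : ∀ t, Y (t + 6) = Y t) :
    ∃ r, Y r + Y (r + 2) = 0 ∧ Y (r + 1) + Y (r + 2) + Y (r + 3) + Y (r + 4) = 0 := by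
  have hY : ∀ t, Y t = Y (t % 6) := by
    intro t
    conv_lhs => rw [← Nat.mod_add_div t 6]
    generalize t / 6 = q
    induction q with
    | zero => simp
    | succ q ih =>
      rw [Nat.mul_succ, ← Nat.add_assoc, hper, ih]
  have key : ∀ y : Fin 6 → ZMod 2, ∃ r : Fin 6,
      y r + y (r + 2) = 0 ∧ y (r + 1) + y (r + 2) + y (r + 3) + y (r + 4) = 0 := by decide
  obtain ⟨r, hr1, hr2⟩ := key (fun j => Y j.1)
  have hv : ∀ k : Fin 6, ((r + k) : Fin 6).1 = (r.1 + k.1) % 6 := by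
    intro k
    simp [Fin.add_def]
  have e : ∀ k : Fin 6, Y (r.1 + k.1) = Y ((r + k).1) := by
    intro k
    rw [hY (r.1 + k.1), hv k]
  have e' : ∀ (k : Fin 6) (kn : ℕ), kn = k.1 → Y (r.1 + kn) = Y ((r + k).1) :=
    fun k kn h => h ▸ e k
  refine ⟨r.1, ?_, ?_⟩
  · rw [e' 2 2 rfl]
    exact hr1
  · rw [e' 1 1 rfl, e' 2 2 rfl, e' 3 3 rfl, e' 4 4 rfl]
    exact hr2

lemma cls_period {m n : ℕ} (t : ℕ) : cls m n (t + m) = cls m n t := by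
  funext i; simp [cls, Nat.add_mod_right]

lemma cls_Y_per {m n : ℕ} (x : Fin n → ZMod 2) (t : ℕ) :
    dotp (cls m n (t + m)) x = dotp (cls m n t) x := by rw [cls_period]

lemma cover1 {m n : ℕ} (hm : Odd m) (hmn : m ∣ n) (hn : 0 < n) (x : Fin n → ZMod 2) :
    ∃ r, dotp (cls m n 0 + cls m n 1) ((cycShift (ZMod 2) n)^[r] x) = 0 := by
  by_contra hbad
  push_neg at hbad
  refine odd_seq1 hm (fun t => dotp (cls m n t) x) (cls_Y_per x) ?_
  intro r
  have h := hbad r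
  rw [dotp_add_left, cls_shift hmn hn x r 0, cls_shift hmn hn x r 1] at h
  simpa [Nat.zero_add, Nat.add_comm 1 r] using h

lemma cover2 {m n : ℕ} (hm : Odd m) (hmn : m ∣ n) (hn : 0 < n) (x : Fin n → ZMod 2) :
    ∃ r, dotp (cls m n 0 + cls m n 3) ((cycShift (ZMod 2) n)^[r] x) = 0 ∧
      dotp (cls m n 1 + cls m n 2) ((cycShift (ZMod 2) n)^[r] x) = 0 := by
  by_contra hbad
  push_neg at hbad
  refine odd_seq2 hm (fun t => dotp (cls m n t) x) (cls_Y_per x) ?_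
  intro r hcontra
  obtain ⟨h1, h2⟩ := hcontra
  have h := hbad r
  rw [dotp_add_left, dotp_add_left, cls_shift hmn hn x r 0, cls_shift hmn hn x r 3,
    cls_shift hmn hn x r 1, cls_shift hmn hn x r 2] at h
  rw [Nat.zero_add, Nat.add_comm 3 r, Nat.add_comm 1 r, Nat.add_comm 2 r] at h
  exact (h h1) h2

lemma cover6 {n : ℕ} (hmn : 6 ∣ n) (hn : 0 < n) (x : Fin n → ZMod 2) :
    ∃ r, dotp (cls 6 n 0 + cls 6 n 2) ((cycShift (ZMod 2) n)^[r] x) = 0 ∧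
      dotp (cls 6 n 1 + (cls 6 n 2 + (cls 6 n 3 + cls 6 n 4))) ((cycShift (ZMod 2) n)^[r] x) = 0 := by
  obtain ⟨r, h1, h2⟩ := six_seq (fun t => dotp (cls 6 n t) x) (cls_Y_per x)
  refine ⟨r, ?_, ?_⟩
  · rw [dotp_add_left, cls_shift hmn hn x r 0, cls_shift hmn hn x r 2,
      Nat.zero_add, Nat.add_comm 2 r]
    exact h1
  · rw [dotp_add_left, dotp_add_left, dotp_add_left, cls_shift hmn hn x r 1,
      cls_shift hmn hn x r 2, cls_shift hmn hn x r 3, cls_shift hmn hn x r 4,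
      Nat.add_comm 1 r, Nat.add_comm 2 r, Nat.add_comm 3 r, Nat.add_comm 4 r]
    rw [← add_assoc, ← add_assoc]
    exact h2

def sigmaL (n : ℕ) : (Fin n → ZMod 2) →ₗ[ZMod 2] (Fin n → ZMod 2) where
  toFun := cycShift (ZMod 2) n
  map_add' _ _ := rfl
  map_smul' _ _ := rfl

lemma sigmaL_pow_apply (n k : ℕ) (x : Fin n → ZMod 2) :
    (sigmaL n ^ k) x = (cycShift (ZMod 2) n)^[k] x := Module.End.pow_apply _ _ _

lemma end_add_self (n : ℕ) (X : (Fin n → ZMod 2) →ₗ[ZMod 2] (Fin n → ZMod 2)) :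
    X + X = 0 := by
  apply LinearMap.ext
  intro x
  funext i
  show X x i + X x i = 0
  exact CharTwo.add_self_eq_zero _

lemma sigmaL_pow_n {n : ℕ} (hn : 0 < n) : sigmaL n ^ n = 1 := by
  apply LinearMap.ext
  intro x
  funext i
  rw [sigmaL_pow_apply, cyc_iter n hn]
  show x _ = x i
  congr 1
  ext
  show (i.1 + n) % n = i.1
  rw [Nat.add_mod_right]
  exact Nat.mod_eq_of_lt i.2

lemma sigmaL_pow_mod {n : ℕ} (hn : 0 < n) (k : ℕ) :
    sigmaL n ^ k = sigmaL n ^ (k % n) := by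
  conv_lhs => rw [← Nat.mod_add_div k n]
  rw [pow_add, pow_mul, sigmaL_pow_n hn, one_pow, mul_one]

lemma frob2 {n : ℕ} (A : (Fin n → ZMod 2) →ₗ[ZMod 2] (Fin n → ZMod 2)) (d : ℕ) :
    (A + 1) ^ (2 ^ d) = A ^ (2 ^ d) + 1 := by
  induction d with
  | zero => simp
  | succ d ih =>
    rw [pow_succ, pow_mul, ih]
    have expand : (A ^ (2^d) + 1) ^ 2 = (A ^ (2^d)) ^ 2 + (A ^ (2^d) + A ^ (2^d)) + 1 := by
      noncomm_ring
    rw [expand, end_add_self, add_zero, ← pow_mul, ← pow_succ]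

lemma pow2_cov {d n : ℕ} (hd : n = 2 ^ d) (hn : 0 < n)
    (U : Submodule (ZMod 2) (Fin n → ZMod 2)) (hU : IsCycCovering (ZMod 2) n U) : U = ⊤ := by
  by_contra hne
  obtain ⟨x0, hx0⟩ : ∃ x, x ∉ U := by
    by_contra h
    push_neg at h
    exact hne (Submodule.eq_top_iff'.mpr h)
  have hq0 : U.mkQ x0 ≠ 0 := by
    intro h
    apply hx0
    rwa [Submodule.mkQ_apply, Submodule.Quotient.mk_eq_zero] at h
  obtain ⟨g, hg⟩ : ∃ g : Module.Dual (ZMod 2) ((Fin n → ZMod 2) ⧸ U), g (U.mkQ x0) ≠ 0 := by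
    by_contra h
    push_neg at h
    exact hq0 ((Module.forall_dual_apply_eq_zero_iff (ZMod 2) _).mp h)
  set f : Module.Dual (ZMod 2) (Fin n → ZMod 2) := g.comp U.mkQ with hf
  have hfU : ∀ u ∈ U, f u = 0 := by
    intro u hu
    show g (U.mkQ u) = 0
    rw [Submodule.mkQ_apply, (Submodule.Quotient.mk_eq_zero U).mpr hu, map_zero]
  set Φ : (Fin n → ZMod 2) →ₗ[ZMod 2] (Fin n → ZMod 2) :=
    LinearMap.pi (fun r : Fin n => f ∘ₗ (sigmaL n ^ r.1)) with hΦ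
  have hΦ_apply : ∀ x (r : Fin n), Φ x r = f ((sigmaL n ^ r.1) x) := fun x r => rfl
  have hcomm : ∀ x, Φ (sigmaL n x) = sigmaL n (Φ x) := by
    intro x
    funext i
    show f ((sigmaL n ^ i.1) (sigmaL n x)) = Φ x ⟨(i.1 + 1) % n, _⟩
    rw [hΦ_apply]
    congr 1
    rw [← sigmaL_pow_mod hn]
    show (sigmaL n ^ i.1 * sigmaL n) x = _
    rw [← pow_succ]
  set T := sigmaL n + 1 with hT
  have hTapp : ∀ y, T y = sigmaL n y + y := fun y => rfl
  have hTrange : ∀ k x, ∃ y, (T ^ k) (Φ x) = Φ y := by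
    intro k
    induction k with
    | zero => intro x; exact ⟨x, by simp⟩
    | succ k ih =>
      intro x
      obtain ⟨y, hy⟩ := ih (sigmaL n x + x)
      refine ⟨y, ?_⟩
      rw [pow_succ, Module.End.mul_apply,
        show T (Φ x) = Φ (sigmaL n x + x) from by rw [hTapp, map_add, hcomm], hy]
  have hTn : T ^ n = 0 := by
    rw [hT, hd, frob2, ← hd, sigmaL_pow_n hn]
    exact end_add_self n 1
  set v0 := Φ x0 with hv0def
  have hv0 : v0 ≠ 0 := by
    intro h
    apply hg
    have := congrFun h ⟨0, hn⟩
    rw [hv0def, hΦ_apply, pow_zero] at this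
    exact this
  have hex : ∃ k, (T ^ (k + 1)) v0 = 0 := by
    refine ⟨n - 1, ?_⟩
    rw [Nat.sub_add_cancel hn, hTn]
    rfl
  set k0 := Nat.find hex with hk0def
  have hk1 : (T ^ (k0 + 1)) v0 = 0 := Nat.find_spec hex
  have hk0 : (T ^ k0) v0 ≠ 0 := by
    rcases Nat.eq_zero_or_pos k0 with h | h
    · rw [h, pow_zero]; exact hv0
    · have := Nat.find_min hex (show k0 - 1 < k0 by omega)
      rw [show k0 - 1 + 1 = k0 by omega] at this
      exact this
  set w := (T ^ k0) v0 with hwdef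
  have hTw : T w = 0 := by
    rw [hwdef, ← Module.End.mul_apply, ← pow_succ']
    exact hk1
  have hw : sigmaL n w = w := by
    have h2 : sigmaL n w + w = 0 := by rw [← hTapp]; rw [hTw]
    have hww : w + w = 0 := funext fun i => CharTwo.add_self_eq_zero _
    have h3 : sigmaL n w = sigmaL n w + (w + w) := by rw [hww, add_zero]
    rw [h3, ← add_assoc, h2, zero_add]
  have hconst : ∀ j : ℕ, w ⟨j % n, Nat.mod_lt _ hn⟩ = w ⟨0, hn⟩ := by
    intro j
    induction j with
    | zero => congr 1
    | succ j ih =>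
      have hstep := congrFun hw ⟨j % n, Nat.mod_lt _ hn⟩
      have e1 : w ⟨(j+1) % n, Nat.mod_lt _ hn⟩ = w ⟨(j % n + 1) % n, Nat.mod_lt _ hn⟩ := by
        congr 1
        ext
        exact (Nat.mod_add_mod j n 1).symm
      have e2 : (sigmaL n w) ⟨j % n, Nat.mod_lt _ hn⟩ = w ⟨(j % n + 1) % n, Nat.mod_lt _ hn⟩ := rfl
      rw [e1, ← e2, hstep]
      exact ih
  have hw0 : w ⟨0, hn⟩ = 1 := by
    have hne01 : ∀ c : ZMod 2, c ≠ 0 → c = 1 := by decide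
    apply hne01
    intro h0
    apply hk0
    funext i
    have : w i = w ⟨i.1 % n, Nat.mod_lt _ hn⟩ := by
      congr 1
      ext
      exact (Nat.mod_eq_of_lt i.2).symm
    rw [this, hconst i.1, h0]
    rfl
  have hall : ∀ i : Fin n, w i = 1 := by
    intro i
    have : w i = w ⟨i.1 % n, Nat.mod_lt _ hn⟩ := by
      congr 1
      ext
      exact (Nat.mod_eq_of_lt i.2).symm
    rw [this, hconst i.1, hw0]
  obtain ⟨y, hy⟩ := hTrange k0 x0
  obtain ⟨r, hr⟩ := hU y
  have hzero : f ((cycShift (ZMod 2) n)^[r % n] y) = 0 := by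
    rw [← cyc_iter_mod n hn]
    exact hfU _ hr
  have hone : f ((cycShift (ZMod 2) n)^[r % n] y) = 1 := by
    rw [← sigmaL_pow_apply, ← hΦ_apply y ⟨r % n, Nat.mod_lt _ hn⟩, ← hy]
    exact hall ⟨r % n, Nat.mod_lt _ hn⟩
  rw [hzero] at hone
  exact zero_ne_one hone

lemma cyc_three (x : Fin 3 → ZMod 2) : (cycShift (ZMod 2) 3)^[3] x = x := by
  rw [cyc_iter_mod 3 (by norm_num)]
  norm_num

lemma three_bound (U : Submodule (ZMod 2) (Fin 3 → ZMod 2)) (hU : IsCycCovering (ZMod 2) 3 U) :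
    finrank (ZMod 2) (Fin 3 → ZMod 2) - finrank (ZMod 2) U ≤ 1 := by
  classical
  haveI : Fintype U := Fintype.ofFinite _
  by_contra hcon
  push_neg at hcon
  have hr : finrank (ZMod 2) (Fin 3 → ZMod 2) = 3 := Module.finrank_fin_fun (ZMod 2)
  have hU1 : finrank (ZMod 2) U ≤ 1 := by
    have := Submodule.finrank_le U
    omega
  have hcard : Fintype.card U ≤ 2 := by
    rw [card_eq_pow_finrank (K := ZMod 2) (V := U)]
    have h2 : Fintype.card (ZMod 2) = 2 := by simp
    rw [h2]
    calc (2:ℕ) ^ finrank (ZMod 2) U ≤ 2 ^ 1 := Nat.pow_le_pow_right (by norm_num) hU1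
    _ = 2 := by norm_num
  set g : (Fin 3 → ZMod 2) → Fin 3 × U := fun x =>
    ⟨⟨Nat.find (hU x) % 3, Nat.mod_lt _ (by norm_num)⟩,
     ⟨(cycShift (ZMod 2) 3)^[Nat.find (hU x) % 3] x, by
        rw [← cyc_iter_mod 3 (by norm_num)]
        exact Nat.find_spec (hU x)⟩⟩ with hg
  have hinj : Function.Injective g := by
    intro x y hxy
    rw [hg] at hxy
    have h1 : Nat.find (hU x) % 3 = Nat.find (hU y) % 3 := by
      have := congrArg Prod.fst hxy
      simpa using this
    have h2 : (cycShift (ZMod 2) 3)^[Nat.find (hU x) % 3] x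
        = (cycShift (ZMod 2) 3)^[Nat.find (hU y) % 3] y := by
      have := congrArg Prod.snd hxy
      simpa [Subtype.ext_iff] using this
    rw [← h1] at h2
    set a := Nat.find (hU x) % 3 with ha
    have haa : a ≤ 3 := by omega
    have e : ∀ z : Fin 3 → ZMod 2, (cycShift (ZMod 2) 3)^[3 - a] ((cycShift (ZMod 2) 3)^[a] z) = z := by
      intro z
      rw [← Function.iterate_add_apply, Nat.sub_add_cancel haa, cyc_three]
    rw [← e x, h2, e y]
  have hle := Fintype.card_le_of_injective g hinj
  have hc1 : Fintype.card (Fin 3 → ZMod 2) = 8 := by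
    rw [Fintype.card_fun]
    simp
  have hc2 : Fintype.card (Fin 3 × U) = 3 * Fintype.card U := by
    rw [Fintype.card_prod, Fintype.card_fin]
  omega


lemma oddpart (n : ℕ) (hn : 0 < n) : ∃ k m, Odd m ∧ n = 2 ^ k * m := by
  refine ⟨n.factorization 2, ordCompl[2] n, ?_, (Nat.ordProj_mul_ordCompl_eq_self n 2).symm⟩
  rw [Nat.odd_iff]
  have h2 := Nat.not_dvd_ordCompl Nat.prime_two hn.ne'
  omega

lemma split_cases (n : ℕ) (hn : 0 < n) :
    (∃ d, n = 2 ^ d) ∨ n = 3 ∨ (∃ m, Odd m ∧ 5 ≤ m ∧ m ∣ n) ∨ 6 ∣ n := by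
  obtain ⟨k, m, hm, hnm⟩ := oddpart n hn
  have hm1 : m % 2 = 1 := Nat.odd_iff.mp hm
  rcases Nat.lt_or_ge m 5 with h5 | h5
  · -- m ∈ {1, 3}
    interval_cases m
    · omega
    · exact Or.inl ⟨k, by rw [hnm]; ring⟩
    · omega
    · rcases Nat.eq_zero_or_pos k with hk | hk
      · subst hk; right; left; rw [hnm]; ring
      · right; right; right
        have h2 : (2:ℕ) ^ k = 2 * 2 ^ (k - 1) := by
          conv_lhs => rw [show k = (k-1) + 1 by omega]
          rw [pow_succ']
        exact ⟨2 ^ (k - 1), by rw [hnm, h2]; ring⟩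
    · omega
  · right; right; left
    exact ⟨m, hm, h5, ⟨2 ^ k, by rw [hnm]; ring⟩⟩

lemma three_not_pow : ¬ ∃ d : ℕ, (3:ℕ) = 2 ^ d := by
  rintro ⟨d, h⟩
  rcases d with _ | d
  · simp at h
  · have : (2:ℕ) ∣ 2 ^ (d+1) := dvd_pow_self 2 (Nat.succ_ne_zero d)
    rw [← h] at this
    omega

lemma cls_val_small {m n : ℕ} (k : ℕ) (hk : k < m) (j : Fin n) (hj : j.1 < m) :
    cls m n k j = if j.1 = k then 1 else 0 := by
  show (if j.1 % m = k % m then (1:ZMod 2) else 0) = _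
  rw [Nat.mod_eq_of_lt hk, Nat.mod_eq_of_lt hj]

lemma one_mem {m n : ℕ} (hm : Odd m) (hm3 : 3 ≤ m) (hmn : m ∣ n) (hn : 0 < n) :
    ∃ U : Submodule (ZMod 2) (Fin n → ZMod 2), IsCycCovering (ZMod 2) n U ∧
      Module.finrank (ZMod 2) (Fin n → ZMod 2) - Module.finrank (ZMod 2) U = 1 := by
  have hnm : m ≤ n := Nat.le_of_dvd hn hmn
  apply mem1 hn (cls m n 0 + cls m n 1) (cover1 hm hmn hn) (Pi.single ⟨0, hn⟩ 1)
  rw [dotp_single]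
  rw [Pi.add_apply, cls_val_small 0 (by omega) _ (by simp; omega),
    cls_val_small 1 (by omega) _ (by simp; omega)]
  norm_num

lemma two_mem_odd {m n : ℕ} (hm : Odd m) (hm5 : 5 ≤ m) (hmn : m ∣ n) (hn : 0 < n) :
    ∃ U : Submodule (ZMod 2) (Fin n → ZMod 2), IsCycCovering (ZMod 2) n U ∧
      Module.finrank (ZMod 2) (Fin n → ZMod 2) - Module.finrank (ZMod 2) U = 2 := by
  have hnm : m ≤ n := Nat.le_of_dvd hn hmn
  have h1n : 1 < n := by omega
  apply mem2 (by omega) (cls m n 0 + cls m n 3) (cls m n 1 + cls m n 2)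
    (fun x => cover2 hm hmn hn x) (Pi.single ⟨0, hn⟩ 1) (Pi.single ⟨1, h1n⟩ 1)
  all_goals rw [dotp_single, Pi.add_apply]
  · rw [cls_val_small 0 (by omega) _ (by simp; omega), cls_val_small 3 (by omega) _ (by simp; omega)]
    norm_num
  · rw [cls_val_small 1 (by omega) _ (by simp; omega), cls_val_small 2 (by omega) _ (by simp; omega)]
    norm_num
  · rw [cls_val_small 0 (by omega) _ (by simp; omega), cls_val_small 3 (by omega) _ (by simp; omega)]
    norm_num
  · rw [cls_val_small 1 (by omega) _ (by simp; omega), cls_val_small 2 (by omega) _ (by simp; omega)]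
    norm_num

lemma two_mem_six {n : ℕ} (hmn : 6 ∣ n) (hn : 0 < n) :
    ∃ U : Submodule (ZMod 2) (Fin n → ZMod 2), IsCycCovering (ZMod 2) n U ∧
      Module.finrank (ZMod 2) (Fin n → ZMod 2) - Module.finrank (ZMod 2) U = 2 := by
  have hnm : 6 ≤ n := Nat.le_of_dvd hn hmn
  have h1n : 1 < n := by omega
  apply mem2 (by omega) (cls 6 n 0 + cls 6 n 2) (cls 6 n 1 + (cls 6 n 2 + (cls 6 n 3 + cls 6 n 4)))
    (fun x => cover6 hmn hn x) (Pi.single ⟨0, hn⟩ 1) (Pi.single ⟨1, h1n⟩ 1)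
  · rw [dotp_single]; simp [cls]
  · rw [dotp_single]; simp [cls]
  · rw [dotp_single]; simp [cls]
  · rw [dotp_single]; simp [cls]
end Aux

/-- h₂(n) = 0 iff n is a power of 2, and h₂(n) = 1 iff n = 3. -/
theorem stmt_19 (n : ℕ) (hn : 0 < n) :
    (hq (ZMod 2) n = 0 ↔ ∃ d : ℕ, n = 2 ^ d) ∧ (hq (ZMod 2) n = 1 ↔ n = 3) := by
  classical
  set S : Set ℕ := {k | ∃ U : Submodule (ZMod 2) (Fin n → ZMod 2), IsCycCovering (ZMod 2) n U ∧
    Module.finrank (ZMod 2) (Fin n → ZMod 2) - Module.finrank (ZMod 2) U = k} with hSdef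
  have hqS : hq (ZMod 2) n = sSup S := rfl
  have h0S : (0:ℕ) ∈ S := ⟨⊤, fun x => ⟨0, trivial⟩, by rw [finrank_top]; omega⟩
  have hne : S.Nonempty := ⟨0, h0S⟩
  have hbdd : BddAbove S := by
    refine ⟨Module.finrank (ZMod 2) (Fin n → ZMod 2), ?_⟩
    rintro k ⟨U, _, hk⟩
    omega
  have hub : ∀ k ∈ S, k ≤ sSup S := fun k hk => le_csSup hbdd hk
  rcases split_cases n hn with ⟨d, hd⟩ | h3 | ⟨m, hmodd, hm5, hmn⟩ | h6
  · -- n is a power of two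
    have hS0 : ∀ k ∈ S, k ≤ 0 := by
      rintro k ⟨U, hcov, hk⟩
      rw [pow2_cov hd hn U hcov, finrank_top] at hk
      omega
    have hsup : sSup S = 0 := le_antisymm (csSup_le hne hS0) (Nat.zero_le _)
    constructor
    · rw [hqS, hsup]
      exact ⟨fun _ => ⟨d, hd⟩, fun _ => rfl⟩
    · rw [hqS, hsup]
      constructor
      · intro h; exact absurd h (by norm_num)
      · intro h; exact absurd ⟨d, h ▸ hd⟩ three_not_pow
  · -- n = 3
    subst h3
    have h1S : (1:ℕ) ∈ S := one_mem (by decide) (by norm_num) dvd_rfl hn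
    have hle : ∀ k ∈ S, k ≤ 1 := by
      rintro k ⟨U, hcov, hk⟩
      rw [← hk]
      exact three_bound U hcov
    have hsup : sSup S = 1 := le_antisymm (csSup_le hne hle) (hub 1 h1S)
    rw [hqS, hsup]
    constructor
    · constructor
      · intro h; exact absurd h (by norm_num)
      · intro h; exact absurd h three_not_pow
    · exact ⟨fun _ => rfl, fun _ => rfl⟩
  · -- odd divisor m ≥ 5
    have h2S : (2:ℕ) ∈ S := two_mem_odd hmodd hm5 hmn hn
    have h2le : 2 ≤ sSup S := hub 2 h2S
    have hnot3 : n ≠ 3 := by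
      intro h
      subst h
      have := Nat.le_of_dvd (by norm_num) hmn
      omega
    have hnotp : ¬ ∃ d : ℕ, n = 2 ^ d := by
      rintro ⟨d, hd⟩
      obtain ⟨U, hcov, hk⟩ := h2S
      rw [pow2_cov hd hn U hcov, finrank_top] at hk
      omega
    rw [hqS]
    exact ⟨⟨fun h => by omega, fun h => absurd h hnotp⟩,
           ⟨fun h => by omega, fun h => absurd h hnot3⟩⟩
  · -- 6 ∣ n
    have h2S : (2:ℕ) ∈ S := two_mem_six h6 hn
    have h2le : 2 ≤ sSup S := hub 2 h2S
    have hnot3 : n ≠ 3 := by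
      intro h
      subst h
      have := Nat.le_of_dvd (by norm_num) h6
      omega
    have hnotp : ¬ ∃ d : ℕ, n = 2 ^ d := by
      rintro ⟨d, hd⟩
      obtain ⟨U, hcov, hk⟩ := h2S
      rw [pow2_cov hd hn U hcov, finrank_top] at hk
      omega
    rw [hqS]
    exact ⟨⟨fun h => by omega, fun h => absurd h hnotp⟩,
           ⟨fun h => by omega, fun h => absurd h hnot3⟩⟩
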